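/- Let X be a Kan complex, m ≥ 0, and b an m-cycle in X. Then the relation ∼ on S(X,b) is an equivalence relation. -/

import Mathlib

open CategoryTheory Simplicial Opposite

universe u

namespace Paper

/-- A simplicial set has the Kan extension property for all horns. -/
def IsKan (X : SSet.{u}) : Prop :=
  ∀ (m : ℕ), 0 < m → ∀ (i : Fin (m + 1)) (σ : (Λ[m, i] : SSet.{u}) ⟶ X),
    ∃ τ : Δ[m] ⟶ X, σ = Λ[m, i].ι ≫ τ

/-- `X` is an `n`-groupoid: every horn has a filler, unique in dimensions `≥ n+1`. -/
def IsNGroupoid (n : ℕ) (X : SSet.{u}) : Prop :=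
  IsKan X ∧
    ∀ (m : ℕ), n + 1 ≤ m → ∀ (i : Fin (m + 1)) (τ τ' : Δ[m] ⟶ X),
      Λ[m, i].ι ≫ τ = Λ[m, i].ι ≫ τ' → τ = τ'

/-- `X` is an `n`-category: every inner horn has a filler, unique in dimensions `≥ n+1`. -/
def IsNCategory (n : ℕ) (X : SSet.{u}) : Prop :=
  (∀ (m : ℕ) (i : Fin (m + 1)), 0 < (i : ℕ) → (i : ℕ) < m →
      ∀ (σ : (Λ[m, i] : SSet.{u}) ⟶ X), ∃ τ : Δ[m] ⟶ X, σ = Λ[m, i].ι ≫ τ) ∧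
    ∀ (m : ℕ), n + 1 ≤ m → ∀ (i : Fin (m + 1)), 0 < (i : ℕ) → (i : ℕ) < m →
      ∀ (τ τ' : Δ[m] ⟶ X),
        Λ[m, i].ι ≫ τ = Λ[m, i].ι ≫ τ' → τ = τ'

/-- Homotopy of `m`-simplices relative to the boundary: there is
`h ∈ X_{m+1}` with `d₀ h = α`, `d₁ h = β` and `dᵢ h = dᵢ (s₀ α)` for `2 ≤ i`. -/
def Htpy (X : SSet.{u}) {m : ℕ} (α β : X _⦋m⦌) : Prop :=
  ∃ h : X _⦋m + 1⦌, X.δ 0 h = α ∧ X.δ 1 h = β ∧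
    ∀ i : Fin (m + 2), 2 ≤ (i : ℕ) → X.δ i h = X.δ i (X.σ 0 α)

/-- The constant `m`-simplex at a vertex `a`. -/
def constSimplex (X : SSet.{u}) (a : X _⦋0⦌) (m : ℕ) : X _⦋m⦌ :=
  X.map (SimplexCategory.const ⦋m⦌ ⦋0⦌ 0).op a

/-- The cycle condition: `dᵢ x_j = d_{j-1} x_i` for `i < j`. -/
def IsCycle (X : SSet.{u}) : ∀ {m : ℕ}, (Fin (m + 2) → X.obj (op ⦋m⦌)) → Prop
| 0, _ => True
| m + 1, x =>
      ∀ (i j : ℕ) (hj : j < m + 3) (hij : i < j),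
        X.δ ⟨i, by omega⟩ (x ⟨j, hj⟩) = X.δ ⟨j - 1, by omega⟩ (x ⟨i, by omega⟩)

/-- The type of `m`-cycles of `X`; by convention there is a unique `0`-cycle. -/
def CycleType (X : SSet.{u}) : ℕ → Type u
| 0 => PUnit
| m + 1 => { x : Fin (m + 2) → X.obj (op ⦋m⦌) // IsCycle X x }

/-- `S(X, b)`: the set of `m`-simplices with boundary the cycle `b`
(all vertices, for `m = 0`). -/
def SSimp (X : SSet.{u}) : ∀ (m : ℕ), CycleType X m → Set (X _⦋m⦌)
| 0, _ => Set.univ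
| m + 1, b => { α | ∀ i : Fin (m + 2), X.δ i α = b.1 i }

lemma map_delta {X Y : SSet.{u}} (f : X ⟶ Y) {n : ℕ} (i : Fin (n + 2)) (x : X _⦋n + 1⦌) :
    f.app (op ⦋n⦌) (X.δ i x) = Y.δ i (f.app (op ⦋n + 1⦌) x) :=
  NatTrans.naturality_apply f (SimplexCategory.δ i).op x

lemma map_sigma {X Y : SSet.{u}} (f : X ⟶ Y) {n : ℕ} (i : Fin (n + 1)) (x : X _⦋n⦌) :
    f.app (op ⦋n + 1⦌) (X.σ i x) = Y.σ i (f.app (op ⦋n⦌) x) :=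
  NatTrans.naturality_apply f (SimplexCategory.σ i).op x

lemma map_const {X Y : SSet.{u}} (f : X ⟶ Y) (a : X _⦋0⦌) (m : ℕ) :
    f.app (op ⦋m⦌) (constSimplex X a m) = constSimplex Y (f.app (op ⦋0⦌) a) m :=
  NatTrans.naturality_apply f (SimplexCategory.const ⦋m⦌ ⦋0⦌ 0).op a

/-- The image of a cycle under a simplicial map. -/
def cycleMap {X Y : SSet.{u}} (f : X ⟶ Y) : ∀ {m : ℕ}, CycleType X m → CycleType Y m
| 0, _ => PUnit.unit.{u + 1}
| m + 1, b => ⟨fun i => f.app (op ⦋m⦌) (b.1 i), by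
      cases m with
      | zero => trivial
      | succ m =>
        intro i j hj hij
        rw [← map_delta, ← map_delta, b.2 i j hj hij]⟩

lemma htpy_map {X Y : SSet.{u}} (f : X ⟶ Y) {m : ℕ} {α β : X _⦋m⦌} (h : Htpy X α β) :
    Htpy Y (f.app (op ⦋m⦌) α) (f.app (op ⦋m⦌) β) := by
  obtain ⟨H, h0, h1, hrest⟩ := h
  refine ⟨f.app (op ⦋m + 1⦌) H, ?_, ?_, ?_⟩
  · rw [← map_delta, h0]
  · rw [← map_delta, h1]
  · intro i hi
    rw [← map_delta, hrest i hi, map_delta, map_sigma]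

/-- `S_k(X, a)`: simplices all of whose faces are the constant simplex at `a`. -/
def SKset (X : SSet.{u}) (a : X _⦋0⦌) : (k : ℕ) → Set (X _⦋k⦌)
| 0 => Set.univ
| k + 1 => { α | ∀ i : Fin (k + 2), X.δ i α = constSimplex X a k }

/-- The `k`-th homotopy set `π_k(X, a)`. -/
def piSet (X : SSet.{u}) (a : X _⦋0⦌) (k : ℕ) : Type u :=
  Quot (fun (α β : SKset X a k) => Htpy X α.1 β.1)

lemma skMap_mem {X Y : SSet.{u}} (f : X ⟶ Y) (a : X _⦋0⦌) (k : ℕ) (α : SKset X a k) :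
    f.app (op ⦋k⦌) α.1 ∈ SKset Y (f.app (op ⦋0⦌) a) k := by
  cases k with
  | zero => trivial
  | succ k =>
    intro i
    rw [← map_delta f i α.1, α.2 i, map_const]

/-- The map induced on homotopy sets by a simplicial map. -/
def piMap {X Y : SSet.{u}} (f : X ⟶ Y) (a : X _⦋0⦌) (k : ℕ) :
    piSet X a k → piSet Y (f.app (op ⦋0⦌) a) k :=
  Quot.lift (fun α => Quot.mk _ ⟨f.app (op ⦋k⦌) α.1, skMap_mem f a k α⟩)
    (fun _ _ h => Quot.sound (htpy_map f h))

/-- A weak equivalence of simplicial sets (Kan complexes): all induced maps on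
homotopy sets are bijections. -/
def IsWeakEquiv {X Y : SSet.{u}} (f : X ⟶ Y) : Prop :=
  ∀ (a : X _⦋0⦌) (k : ℕ), Function.Bijective (piMap f a k)

namespace Aux

open SimplexCategory SSet

variable {X : SSet.{u}}

/- element-level simplicial identities with ℕ indices -/

lemma d_d {q : ℕ} (x : X _⦋q + 2⦌) (a b : ℕ) (hab : a < b) (hb : b < q + 3) :
    X.δ (⟨a, by omega⟩ : Fin (q + 2)) (X.δ (⟨b, hb⟩ : Fin (q + 3)) x) =
      X.δ (⟨b - 1, by omega⟩ : Fin (q + 2)) (X.δ (⟨a, by omega⟩ : Fin (q + 3)) x) := by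
  have h := SSet.δ_comp_δ_apply (S := X) (i := ⟨a, by omega⟩) (j := ⟨b - 1, by omega⟩)
    (by simp only [Fin.mk_le_mk]; omega) x
  have e : (⟨b, hb⟩ : Fin (q + 3)) = (⟨b - 1, by omega⟩ : Fin (q + 2)).succ := by
    ext; simp only [Fin.val_succ]; omega
  rw [e]
  exact h

lemma d_s0 {q : ℕ} (x : X _⦋q + 1⦌) (a : ℕ) (h1 : 2 ≤ a) (h2 : a < q + 3) :
    X.δ (⟨a, h2⟩ : Fin (q + 3)) (X.σ 0 x) =
      X.σ 0 (X.δ (⟨a - 1, by omega⟩ : Fin (q + 2)) x) := by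
  have h := SSet.δ_comp_σ_of_gt_apply (S := X) (i := ⟨a - 1, by omega⟩) (j := 0)
    (by simp only [Fin.lt_def, Fin.coe_castSucc, Fin.val_zero]; omega) x
  have e : (⟨a, h2⟩ : Fin (q + 3)) = (⟨a - 1, by omega⟩ : Fin (q + 2)).succ := by
    ext; simp only [Fin.val_succ]; omega
  rw [e]
  exact h

lemma d0_s0 {q : ℕ} (x : X _⦋q⦌) :
    X.δ (⟨0, by omega⟩ : Fin (q + 2)) (X.σ 0 x) = x := by
  have h := SSet.δ_comp_σ_self_apply (S := X) (0 : Fin (q + 1)) x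
  have e : (⟨0, by omega⟩ : Fin (q + 2)) = Fin.castSucc 0 := by ext; simp
  rw [e]
  exact h

lemma d1_s0 {q : ℕ} (x : X _⦋q⦌) :
    X.δ (⟨1, by omega⟩ : Fin (q + 2)) (X.σ 0 x) = x := by
  have h := SSet.δ_comp_σ_succ_apply (S := X) (0 : Fin (q + 1)) x
  have e : (⟨1, by omega⟩ : Fin (q + 2)) = Fin.succ 0 := by ext; simp
  rw [e]
  exact h

/- the horn-from-compatible-faces construction -/

variable {n : ℕ} {i : Fin (n + 3)}

/-- `f` misses the vertex `j`. -/
abbrev Misses {m : ℕ} (f : (⦋m⦌ : SimplexCategory) ⟶ ⦋n + 2⦌) (j : Fin (n + 3)) : Prop :=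
  ∀ a, f.toOrderHom a ≠ j

/-- compatibility of a family of prospective faces -/
def Compat (u : (j : Fin (n + 3)) → j ≠ i → X _⦋n + 1⦌) : Prop :=
  ∀ (a b : ℕ) (hab : a < b) (hb : b < n + 3)
    (ha2 : (⟨a, by omega⟩ : Fin (n + 3)) ≠ i) (hb2 : (⟨b, hb⟩ : Fin (n + 3)) ≠ i),
    X.δ (⟨a, by omega⟩ : Fin (n + 2)) (u ⟨b, hb⟩ hb2) =
      X.δ (⟨b - 1, by omega⟩ : Fin (n + 2)) (u ⟨a, by omega⟩ ha2)

/-- the value of the horn map on a simplex missing `j` -/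
def hornVal (u : (j : Fin (n + 3)) → j ≠ i → X _⦋n + 1⦌) {m : ℕ}
    (f : (⦋m⦌ : SimplexCategory) ⟶ ⦋n + 2⦌) (j : Fin (n + 3)) (hj : j ≠ i) : X _⦋m⦌ :=
  X.map (factor_δ f j).op (u j hj)

lemma hornVal_congr (u : (j : Fin (n + 3)) → j ≠ i → X _⦋n + 1⦌) {m : ℕ}
    {f f' : (⦋m⦌ : SimplexCategory) ⟶ ⦋n + 2⦌} (e : f = f') (j : Fin (n + 3)) (hj : j ≠ i) :
    hornVal u f j hj = hornVal u f' j hj := by rw [e]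

lemma misses_congr {m : ℕ} {f f' : (⦋m⦌ : SimplexCategory) ⟶ ⦋n + 2⦌} (e : f = f')
    {j : Fin (n + 3)} (h : Misses f j) : Misses f' j := e ▸ h

lemma hornVal_indep_lt (u : (j : Fin (n + 3)) → j ≠ i → X _⦋n + 1⦌) (hu : Compat u)
    {m : ℕ} (f : (⦋m⦌ : SimplexCategory) ⟶ ⦋n + 2⦌)
    {j k : Fin (n + 3)} (hjk : j < k) (hj : j ≠ i) (hk : k ≠ i)
    (hfj : Misses f j) (hfk : Misses f k) :
    hornVal u f j hj = hornVal u f k hk := by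
  have hkv : (j : ℕ) < (k : ℕ) := hjk
  set h := factor_δ f j with hh
  have hspec : h ≫ δ j = f := factor_δ_spec f j hfj
  have hmiss : ∀ a, h.toOrderHom a ≠ (⟨(k : ℕ) - 1, by omega⟩ : Fin (n + 2)) := by
    intro a ha
    apply hfk a
    have : f.toOrderHom a = (δ j).toOrderHom (h.toOrderHom a) := by
      rw [← hspec]; rfl
    rw [this, ha]
    show j.succAbove _ = k
    have hle : j ≤ Fin.castSucc (⟨(k : ℕ) - 1, by omega⟩ : Fin (n + 2)) := by
      simp only [Fin.le_def, Fin.coe_castSucc]; omega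
    rw [Fin.succAbove_of_le_castSucc _ _ hle]
    ext; simp only [Fin.val_succ]; omega
  set g := factor_δ h (⟨(k : ℕ) - 1, by omega⟩ : Fin (n + 2)) with hg
  have gspec : g ≫ δ (⟨(k : ℕ) - 1, by omega⟩ : Fin (n + 2)) = h := factor_δ_spec _ _ hmiss
  have hsq : δ (⟨(j : ℕ), by omega⟩ : Fin (n + 2)) ≫ δ k =
      δ (⟨(k : ℕ) - 1, by omega⟩ : Fin (n + 2)) ≫ δ j := by
    have h' := SimplexCategory.δ_comp_δ' (i := (⟨(j : ℕ), by omega⟩ : Fin (n + 2))) (j := k)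
      (by simp only [Fin.lt_def, Fin.coe_castSucc]; omega)
    exact h' 
  have hfk' : factor_δ f k = g ≫ δ (⟨(j : ℕ), by omega⟩ : Fin (n + 2)) := by
    rw [← cancel_mono (δ k), factor_δ_spec f k hfk, Category.assoc, hsq, ← Category.assoc,
      gspec, hspec]
  have hfj' : factor_δ f j = g ≫ δ (⟨(k : ℕ) - 1, by omega⟩ : Fin (n + 2)) := gspec.symm
  show X.map (factor_δ f j).op (u j hj) = X.map (factor_δ f k).op (u k hk)
  rw [hfj', hfk', op_comp, op_comp, X.map_comp, X.map_comp]
  show X.map g.op (X.δ _ (u j hj)) = X.map g.op (X.δ _ (u k hk))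
  exact congrArg (X.map g.op) (hu (j : ℕ) (k : ℕ) hkv k.isLt hj hk).symm

lemma hornVal_indep (u : (j : Fin (n + 3)) → j ≠ i → X _⦋n + 1⦌) (hu : Compat u)
    {m : ℕ} (f : (⦋m⦌ : SimplexCategory) ⟶ ⦋n + 2⦌)
    (j k : Fin (n + 3)) (hj : j ≠ i) (hk : k ≠ i)
    (hfj : Misses f j) (hfk : Misses f k) :
    hornVal u f j hj = hornVal u f k hk := by
  rcases lt_trichotomy j k with h | h | h
  · exact hornVal_indep_lt u hu f h hj hk hfj hfk
  · subst h; rfl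
  · exact (hornVal_indep_lt u hu f h hk hj hfk hfj).symm

lemma hornVal_comp (u : (j : Fin (n + 3)) → j ≠ i → X _⦋n + 1⦌)
    {m₁ m₂ : ℕ} (θ : (⦋m₂⦌ : SimplexCategory) ⟶ ⦋m₁⦌)
    (f : (⦋m₁⦌ : SimplexCategory) ⟶ ⦋n + 2⦌) (j : Fin (n + 3)) (hj : j ≠ i) :
    hornVal u (θ ≫ f) j hj = X.map θ.op (hornVal u f j hj) := by
  have : factor_δ (θ ≫ f) j = θ ≫ factor_δ f j := by
    dsimp only [factor_δ]
    rw [Category.assoc]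
  show X.map (factor_δ (θ ≫ f) j).op _ = _
  rw [this, op_comp, X.map_comp]
  rfl

lemma exists_missed {m' : SimplexCategoryᵒᵖ} (x : (Λ[n + 2, i] : SSet.{u}).obj m') :
    ∃ j, ¬ j = i ∧ ∀ a, (stdSimplex.objEquiv x.1).toOrderHom a ≠ j := by
  obtain ⟨f, hf⟩ := x
  simp [← Set.univ_subset_iff, Set.subset_def, stdSimplex.asOrderHom, SSet.horn, Set.ofPred, not_or,
    stdSimplex.objEquiv, Equiv.ulift] at hf
  exact hf

/-- The horn map determined by a compatible family of faces. -/
noncomputable def hornMap (u : (j : Fin (n + 3)) → j ≠ i → X _⦋n + 1⦌) (hu : Compat u) :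
    (Λ[n + 2, i] : SSet.{u}) ⟶ X where
  app m' := TypeCat.ofHom fun x =>
    hornVal u (m := m'.unop.len) ((stdSimplex.objEquiv) x.1)
      (exists_missed x).choose (exists_missed x).choose_spec.1
  naturality m₁ m₂ θ := by
    ext x
    have hy : ((stdSimplex.objEquiv) (((Λ[n + 2, i] : SSet.{u}).map θ x).1)
        : (⦋m₂.unop.len⦌ : SimplexCategory) ⟶ ⦋n + 2⦌) =
        (θ.unop : (⦋m₂.unop.len⦌ : SimplexCategory) ⟶ ⦋m₁.unop.len⦌) ≫
          ((stdSimplex.objEquiv) x.1) := by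
      show (stdSimplex.objEquiv) (Δ[n + 2].map θ x.1) = _
      rw [stdSimplex.map_apply]
      exact Equiv.apply_symm_apply _ _
    have h1 := (exists_missed ((Λ[n + 2, i] : SSet.{u}).map θ x)).choose_spec
    have h2 := (exists_missed x).choose_spec
    have hm2 : Misses (show (⦋m₂.unop.len⦌ : SimplexCategory) ⟶ ⦋n + 2⦌ from
        (stdSimplex.objEquiv) (((Λ[n + 2, i] : SSet.{u}).map θ x).1))
        (exists_missed ((Λ[n + 2, i] : SSet.{u}).map θ x)).choose := fun a => h1.2 a
    show hornVal u (m := m₂.unop.len) _ _ _ = X.map θ (hornVal u (m := m₁.unop.len) _ _ _)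
    refine ((hornVal_congr u hy _ h1.1).trans ?_)
    refine (hornVal_indep u hu _ _ (exists_missed x).choose h1.1 h2.1
      (misses_congr hy hm2) (fun a => h2.2 _)).trans ?_
    exact hornVal_comp u (m₁ := m₁.unop.len) (m₂ := m₂.unop.len)
      (show (⦋m₂.unop.len⦌ : SimplexCategory) ⟶ ⦋m₁.unop.len⦌ from θ.unop)
      ((stdSimplex.objEquiv) x.1) (exists_missed x).choose h2.1

lemma hornMap_face (u : (j : Fin (n + 3)) → j ≠ i → X _⦋n + 1⦌) (hu : Compat u)
    (j : Fin (n + 3)) (hj : j ≠ i) :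
    (hornMap u hu).app (op ⦋n + 1⦌) (horn.face i j hj) = u j hj := by
  have hmj : Misses (δ j : (⦋n + 1⦌ : SimplexCategory) ⟶ ⦋n + 2⦌) j := fun a =>
    Fin.succAbove_ne j a
  have key : ∀ (c : Fin (n + 3)) (hc : c ≠ i)
      (_ : Misses (δ j : (⦋n + 1⦌ : SimplexCategory) ⟶ ⦋n + 2⦌) c),
      hornVal (X := X) u (δ j) c hc = u j hj := by
    intro c hc hm
    rw [hornVal_indep u hu (δ j) c j hc hj hm hmj]
    show X.map (factor_δ (δ j : (⦋n + 1⦌ : SimplexCategory) ⟶ ⦋n + 2⦌) j).op (u j hj) = u j hj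
    have hid : factor_δ (δ j : (⦋n + 1⦌ : SimplexCategory) ⟶ ⦋n + 2⦌) j = 𝟙 _ := by
      rw [← cancel_mono (δ j), factor_δ_spec _ _ hmj, Category.id_comp]
    rw [hid, op_id, X.map_id]
    rfl
  exact key _ (exists_missed.{u} (horn.face.{u} i j hj)).choose_spec.1
    (fun a => (exists_missed.{u} (horn.face.{u} i j hj)).choose_spec.2 a)

lemma exists_filler (hX : IsKan X) (u : (j : Fin (n + 3)) → j ≠ i → X _⦋n + 1⦌)
    (hu : Compat u) :
    ∃ t : X _⦋n + 2⦌, ∀ (j : Fin (n + 3)) (hj : j ≠ i), X.δ j t = u j hj := by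
  obtain ⟨τ, hτ⟩ := hX (n + 2) (by omega) i (hornMap u hu)
  refine ⟨τ.app (op ⦋n + 2⦌) ((stdSimplex.objEquiv).symm (𝟙 _)), fun j hj => ?_⟩
  have hnat := ConcreteCategory.congr_hom (τ.naturality (δ j).op) ((stdSimplex.objEquiv).symm (𝟙 _))
  have h1 : X.δ j (τ.app (op ⦋n + 2⦌) ((stdSimplex.objEquiv).symm (𝟙 _))) =
      τ.app (op ⦋n + 1⦌) (Δ[n + 2].map (δ j).op ((stdSimplex.objEquiv).symm (𝟙 _))) :=
    hnat.symm
  have h2 : (Δ[n + 2].map (δ j).op ((stdSimplex.objEquiv).symm (𝟙 _))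
      : Δ[n + 2] _⦋n + 1⦌) = (horn.face i j hj).1 := by
    rw [stdSimplex.map_apply]
    simp
    rfl
  rw [h1, h2]
  have h3 : τ.app (op ⦋n + 1⦌) (horn.face i j hj).1 =
      (Λ[n + 2, i].ι ≫ τ).app (op ⦋n + 1⦌) (horn.face i j hj) := rfl
  rw [h3, ← hτ]
  exact hornMap_face u hu j hj


lemma hrefl {m : ℕ} (x : X _⦋m⦌) : Htpy X x x := by
  refine ⟨X.σ 0 x, ?_, ?_, fun i _ => rfl⟩
  · have e : (0 : Fin (m + 2)) = ⟨0, by omega⟩ := by ext; simp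
    rw [e]; exact d0_s0 x
  · have e : (1 : Fin (m + 2)) = ⟨1, by omega⟩ := by ext; simp
    rw [e]; exact d1_s0 x

set_option maxHeartbeats 2000000 in
lemma euclid (hX : IsKan X) {m : ℕ} {α β γ : X _⦋m⦌}
    (h₁ : Htpy X α β) (h₂ : Htpy X α γ) : Htpy X β γ := by
  obtain ⟨H₁, H₁0, H₁1, H₁r⟩ := h₁
  obtain ⟨H₂, H₂0, H₂1, H₂r⟩ := h₂
  have e0 : (0 : Fin (m + 2)) = ⟨0, by omega⟩ := by ext; simp
  have e1 : (1 : Fin (m + 2)) = ⟨1, by omega⟩ := by ext; simp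
  rw [e0] at H₁0 H₂0
  rw [e1] at H₁1 H₂1
  set u : (j : Fin (m + 3)) → j ≠ (⟨2, by omega⟩ : Fin (m + 3)) → X _⦋m + 1⦌ := fun j _ =>
    if j.val = 0 then H₁ else if j.val = 1 then H₂
    else X.σ 0 (X.δ (⟨j.val - 1, by omega⟩ : Fin (m + 2)) H₁) with hu_def
  have hcompat : Compat u := by
    intro a b hab hb ha2 hb2
    have ha2' : a ≠ 2 := fun h => ha2 (Fin.ext (by show a = 2; omega))
    have hb2' : b ≠ 2 := fun h => hb2 (Fin.ext (by show b = 2; omega))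
    simp only [hu_def]
    have hcase : a = 0 ∧ b = 1 ∨ a = 0 ∧ 3 ≤ b ∨ a = 1 ∧ 3 ≤ b ∨ 3 ≤ a ∧ 4 ≤ b := by omega
    rcases hcase with ⟨rfl, rfl⟩ | ⟨rfl, hb3⟩ | ⟨rfl, hb3⟩ | ⟨ha3, hb4⟩
    · rw [if_neg (by omega), if_pos rfl, if_pos rfl]
      exact H₂0.trans H₁0.symm
    · rw [if_neg (by omega), if_neg (by omega), if_pos rfl]
      exact d0_s0 _
    · rw [if_neg (by omega), if_neg (by omega), if_neg (by omega), if_pos rfl]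
      refine (d1_s0 _).trans ?_
      refine (H₁r ⟨b - 1, by omega⟩ (by show 2 ≤ b - 1; omega)).trans ?_
      exact (H₂r ⟨b - 1, by omega⟩ (by show 2 ≤ b - 1; omega)).symm
    · rw [if_neg (by omega), if_neg (by omega), if_neg (by omega), if_neg (by omega)]
      obtain ⟨m', rfl⟩ : ∃ m', m = m' + 2 := ⟨m - 2, by omega⟩
      refine (d_s0 (q := m' + 1) _ a (by omega) (by omega)).trans ?_
      refine Eq.trans ?_ (d_s0 (q := m' + 1) _ (b - 1) (by omega) (by omega)).symm
      exact congrArg (X.σ 0) (d_d (q := m' + 1) H₁ (a - 1) (b - 1) (by omega) (by omega))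
  obtain ⟨t, ht⟩ := exists_filler hX u hcompat
  refine ⟨X.δ (⟨2, by omega⟩ : Fin (m + 3)) t, ?_, ?_, ?_⟩
  · rw [e0]
    refine (d_d t 0 2 (by omega) (by omega)).trans ?_
    rw [ht ⟨0, by omega⟩ (fun h => by have := congrArg Fin.val h; simp at this)]
    exact H₁1
  · rw [e1]
    refine (d_d t 1 2 (by omega) (by omega)).trans ?_
    rw [ht ⟨1, by omega⟩ (fun h => by have := congrArg Fin.val h; simp at this)]
    exact H₂1
  · intro p hp
    have hplt : (p : ℕ) < m + 2 := p.isLt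
    obtain ⟨m', rfl⟩ : ∃ m', m = m' + 1 := ⟨m - 1, by omega⟩
    refine Eq.trans ((d_d t 2 ((p : ℕ) + 1) (by omega) (by omega)).symm) ?_
    rw [ht ⟨(p : ℕ) + 1, by omega⟩ (fun h => by have := congrArg Fin.val h; simp at this; omega)]
    simp only [hu_def]
    rw [if_neg (by show ¬((p : ℕ) + 1 = 0); omega), if_neg (by show ¬((p : ℕ) + 1 = 1); omega)]
    refine (d_s0 (q := m') _ 2 (by omega) (by omega)).trans ?_
    refine Eq.trans ?_ (d_s0 (q := m') _ (p : ℕ) (by omega) (by omega)).symm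
    refine congrArg (X.σ 0) ?_
    refine (d_d (q := m') H₁ 1 ((p : ℕ) + 1 - 1) (by omega) (by omega)).trans ?_
    rw [H₁1]
    have eidx : (⟨(p : ℕ) + 1 - 1 - 1, by omega⟩ : Fin (m' + 2)) = ⟨(p : ℕ) - 1, by omega⟩ :=
      Fin.ext (show (p : ℕ) + 1 - 1 - 1 = (p : ℕ) - 1 by omega)
    rw [eidx]

end Aux

/-- on a Kan complex, the homotopy relation on `S(X, b)` is an
equivalence relation. -/
theorem htpy_equivalence (X : SSet.{u}) (hX : IsKan X) (m : ℕ) (b : CycleType X m) :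
    Equivalence (fun α β : SSimp X m b => Htpy X α.1 β.1) := by
  constructor
  · intro a; exact Aux.hrefl a.1
  · intro a b h; exact Aux.euclid hX h (Aux.hrefl a.1)
  · intro a b c h1 h2; exact Aux.euclid hX (Aux.euclid hX h1 (Aux.hrefl a.1)) h2

end Paper
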